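/- Let n be a positive integer, C ⊆ ℝ^n a nonempty, compact, connected set such that every ball around a point of C meets C in a set of positive Lebesgue measure (i.e. for all x ∈ C and δ > 0, vol(C ∩ B(x,δ)) > 0), and let f : ℝ^n → ℝ be continuous. Let (Ω, ℱ, ℙ) be a probability space, (ℱ_k) a filtration, and (x_k)_{k≥1} an adapted sequence of random vectors taking values in C almost surely. Suppose there exist constants β > 0 and r > 0 such that for every k and every Borel set Σ ⊆ ℝ^n, almost surely ℙ(x_{k+1} ∈ Σ | ℱ_k) ≥ β · vol(Σ ∩ C ∩ B(x_k, r)), where vol denotes n-dimensional Lebesgue measure and B(x,r) the Euclidean ball of radius r about x. Then the running minimum y_k := min_{1 ≤ j ≤ k} f(x_j) converges almost surely to min_{x ∈ C} f(x). -/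

import Mathlib

open MeasureTheory Filter Metric

lemma chain_exists' {E : Type*} [MetricSpace E] (C : Set E) (hC_conn : IsPreconnected C)
    {s : ℝ} (t' : Finset E) (ht'C : (t' : Set E) ⊆ C)
    (hcover : C ⊆ ⋃ c ∈ (t' : Set E), ball c s) (xs : E) (hxs : xs ∈ t')
    (hs : 0 < s) :
    ∀ c ∈ t', ∃ L : ℕ, ∃ g : ℕ → E, g 0 = c ∧ g L = xs ∧ (∀ i ≤ L, g i ∈ t') ∧
      ∀ i < L, dist (g i) (g (i+1)) < 2*s := by
  set P : E → Prop := fun c => ∃ L : ℕ, ∃ g : ℕ → E, g 0 = c ∧ g L = xs ∧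
      (∀ i ≤ L, g i ∈ t') ∧ ∀ i < L, dist (g i) (g (i+1)) < 2*s with hP
  -- key: prepend step
  have prepend : ∀ c b : E, b ∈ t' → dist b c < 2*s → P c → P b := by
    rintro c b hbt hdist ⟨L, g, hg0, hgL, hgt, hgd⟩
    refine ⟨L + 1, fun i => if i = 0 then b else g (i - 1), by simp, by simp [hgL], ?_, ?_⟩
    · intro i hi
      rcases Nat.eq_zero_or_pos i with h0 | h0
      · simpa [h0] using hbt
      · simp only [Nat.pos_iff_ne_zero.1 h0, if_neg (Nat.pos_iff_ne_zero.1 h0)]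
        exact hgt _ (by omega)
    · intro i hi
      rcases Nat.eq_zero_or_pos i with h0 | h0
      · subst h0; simpa [hg0] using hdist
      · have h1 : i ≠ 0 := Nat.pos_iff_ne_zero.1 h0
        have h2 : i + 1 ≠ 0 := by omega
        simp only [if_neg h1, if_neg h2]
        have : i - 1 + 1 = i + 1 - 1 := by omega
        rw [show i + 1 - 1 = i from by omega]
        have := hgd (i-1) (by omega)
        rwa [show i - 1 + 1 = i from by omega] at this
  intro c0 hc0t
  by_contra hc0
  set U : Set E := ⋃ c ∈ {c : E | c ∈ t' ∧ P c}, ball c s with hU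
  set V : Set E := ⋃ c ∈ {c : E | c ∈ t' ∧ ¬ P c}, ball c s with hV
  have hUo : IsOpen U := isOpen_biUnion fun _ _ => isOpen_ball
  have hVo : IsOpen V := isOpen_biUnion fun _ _ => isOpen_ball
  have hcov : C ⊆ U ∪ V := by
    intro y hy
    obtain ⟨c, hc, hyc⟩ := Set.mem_iUnion₂.1 (hcover hy)
    by_cases hPc : P c
    · exact Or.inl (Set.mem_iUnion₂.2 ⟨c, ⟨hc, hPc⟩, hyc⟩)
    · exact Or.inr (Set.mem_iUnion₂.2 ⟨c, ⟨hc, hPc⟩, hyc⟩)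
  have hPxs : P xs := ⟨0, fun _ => xs, rfl, rfl, fun i hi => by
      simpa using hxs, fun i hi => by omega⟩
  have hCU : (C ∩ U).Nonempty :=
    ⟨xs, ht'C hxs, Set.mem_iUnion₂.2 ⟨xs, ⟨hxs, hPxs⟩, mem_ball_self hs⟩⟩
  have hCV : (C ∩ V).Nonempty :=
    ⟨c0, ht'C hc0t, Set.mem_iUnion₂.2 ⟨c0, ⟨hc0t, hc0⟩, mem_ball_self hs⟩⟩
  obtain ⟨y, -, hyU, hyV⟩ := hC_conn U V hUo hVo hcov hCU hCV
  obtain ⟨a, ⟨hat, hPa⟩, hya⟩ := Set.mem_iUnion₂.1 hyU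
  obtain ⟨b, ⟨hbt, hPb⟩, hyb⟩ := Set.mem_iUnion₂.1 hyV
  exact hPb (prepend a b hbt (by
    have := dist_triangle b y a
    rw [dist_comm b y] at this
    calc dist b a ≤ dist y b + dist y a := by rw [dist_comm y b]; exact dist_triangle b y a
    _ < s + s := add_lt_add hyb hya
    _ = 2*s := by ring) hPa)


lemma step_lemma {n : ℕ} (C : Set (EuclideanSpace ℝ (Fin n)))
    {Ω : Type*} {m0 : MeasurableSpace Ω} (μ : Measure Ω) [IsProbabilityMeasure μ]
    (ℱ : Filtration ℕ m0) (x : ℕ → Ω → EuclideanSpace ℝ (Fin n))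
    (hadp : Adapted ℱ x) (β r : ℝ)
    (htrans : ∀ k, ∀ S : Set (EuclideanSpace ℝ (Fin n)), MeasurableSet S →
      ∀ᵐ ω ∂μ,
        β * (volume (S ∩ C ∩ Metric.ball (x k ω) r)).toReal ≤
          (μ[Set.indicator ((x (k + 1)) ⁻¹' S) (fun _ => (1 : ℝ)) | ℱ k]) ω)
    (k : ℕ) (F : Set Ω) (hF : MeasurableSet[ℱ k] F)
    (G : Set (EuclideanSpace ℝ (Fin n))) (hG : MeasurableSet G) (hGC : G ⊆ C)
    (hGb : ∀ᵐ ω ∂μ, ω ∈ F → G ⊆ Metric.ball (x k ω) r) :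
    β * (volume G).toReal * (μ F).toReal ≤ (μ (F ∩ x (k+1) ⁻¹' G)).toReal := by
  have hFm : MeasurableSet F := ℱ.le k F hF
  have hpre : MeasurableSet (x (k+1) ⁻¹' G) :=
    ℱ.le (k+1) _ (hadp (k+1) hG)
  have hInd : Integrable ((x (k+1) ⁻¹' G).indicator (fun _ => (1:ℝ))) μ :=
    (integrable_const (1:ℝ)).indicator hpre
  have key : ∀ᵐ ω ∂μ.restrict F,
      β * (volume G).toReal ≤ (μ[Set.indicator ((x (k + 1)) ⁻¹' G) (fun _ => (1 : ℝ)) | ℱ k]) ω := by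
    filter_upwards [ae_restrict_of_ae (htrans k G hG), ae_restrict_of_ae hGb,
      ae_restrict_mem hFm] with ω h1 h2 hωF
    have hset : G ∩ C ∩ Metric.ball (x k ω) r = G :=
      subset_antisymm (Set.inter_subset_left.trans Set.inter_subset_left)
        (Set.subset_inter (Set.subset_inter subset_rfl hGC) (h2 hωF))
    rwa [hset] at h1
  calc β * (volume G).toReal * (μ F).toReal
      = ∫ _ω in F, β * (volume G).toReal ∂μ := by
        rw [setIntegral_const, smul_eq_mul, measureReal_def]; ring
    _ ≤ ∫ ω in F, (μ[Set.indicator ((x (k + 1)) ⁻¹' G) (fun _ => (1 : ℝ)) | ℱ k]) ω ∂μ :=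
        setIntegral_mono_ae_restrict (integrableOn_const (measure_ne_top μ F))
          integrable_condExp.integrableOn key
    _ = ∫ ω in F, (x (k+1) ⁻¹' G).indicator (fun _ => (1:ℝ)) ω ∂μ :=
        setIntegral_condExp (ℱ.le k) hInd hF
    _ = (μ (F ∩ x (k+1) ⁻¹' G)).toReal := by
        rw [setIntegral_indicator hpre, setIntegral_const, smul_eq_mul, mul_one, measureReal_def]

lemma hit_lemma (n : ℕ)
    (C : Set (EuclideanSpace ℝ (Fin n)))
    (hC_ne : C.Nonempty) (hC_cpt : IsCompact C) (hC_conn : IsConnected C)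
    (hC_pos : ∀ x ∈ C, ∀ δ : ℝ, 0 < δ →
      0 < MeasureTheory.volume (C ∩ Metric.ball x δ))
    (f : EuclideanSpace ℝ (Fin n) → ℝ) (hf : Continuous f)
    {Ω : Type*} {m0 : MeasurableSpace Ω} (μ : Measure Ω)
    [IsProbabilityMeasure μ] (ℱ : Filtration ℕ m0)
    (x : ℕ → Ω → EuclideanSpace ℝ (Fin n))
    (hadp : Adapted ℱ x)
    (hxC : ∀ k, ∀ᵐ ω ∂μ, x k ω ∈ C)
    (β r : ℝ) (hβ : 0 < β) (hr : 0 < r)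
    (htrans : ∀ k, ∀ S : Set (EuclideanSpace ℝ (Fin n)), MeasurableSet S →
      ∀ᵐ ω ∂μ,
        β * (MeasureTheory.volume (S ∩ C ∩ Metric.ball (x k ω) r)).toReal ≤
          (μ[Set.indicator ((x (k + 1)) ⁻¹' S) (fun _ => (1 : ℝ)) | ℱ k]) ω)
    (ε : ℝ) (hε : 0 < ε) :
    ∀ᵐ ω ∂μ, ∃ j, f (x j ω) < sInf (f '' C) + ε := by
  classical
  -- minimizer
  obtain ⟨xs, hxsC, hmin⟩ := hC_cpt.exists_isMinOn hC_ne hf.continuousOn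
  have hm_eq : sInf (f '' C) = f xs := by
    refine le_antisymm (csInf_le ⟨f xs, ?_⟩ ⟨xs, hxsC, rfl⟩) (le_csInf (hC_ne.image f) ?_)
    · rintro y ⟨z, hz, rfl⟩; exact hmin hz
    · rintro y ⟨z, hz, rfl⟩; exact hmin hz
  -- δ from continuity
  obtain ⟨δ0, hδ0, hδ0f⟩ := Metric.continuousAt_iff.1 (hf.continuousAt (x := xs)) ε hε
  set δ : ℝ := min δ0 (r/4) with hδdef
  have hδ : 0 < δ := lt_min hδ0 (by positivity)
  have hδr : δ ≤ r/4 := min_le_right _ _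
  have hδf : ∀ y, dist y xs < δ → f y < f xs + ε := by
    intro y hy
    have := hδ0f (lt_of_lt_of_le hy (min_le_left _ _))
    rw [Real.dist_eq, abs_lt] at this
    linarith [this.2]
  -- target set
  set T : Set (EuclideanSpace ℝ (Fin n)) := C ∩ ball xs δ with hTdef
  have hT_meas : MeasurableSet T := (hC_cpt.isClosed.measurableSet).inter measurableSet_ball
  have hT_pos : 0 < volume T := hC_pos xs hxsC δ hδ
  have hT_fin : volume T < ⊤ :=
    lt_of_le_of_lt (measure_mono Set.inter_subset_right) measure_ball_lt_top
  have hTC : T ⊆ C := Set.inter_subset_left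
  -- finite cover
  obtain ⟨t, htC, hcovt⟩ := hC_cpt.elim_nhds_subcover (fun c => ball c (r/4))
    (fun c _ => ball_mem_nhds c (by positivity))
  set t' : Finset (EuclideanSpace ℝ (Fin n)) := insert xs t with ht'def
  have hxst' : xs ∈ t' := Finset.mem_insert_self _ _
  have ht'C : (t' : Set (EuclideanSpace ℝ (Fin n))) ⊆ C := by
    intro c hc
    rcases Finset.mem_insert.1 hc with h | h
    · exact h ▸ hxsC
    · exact htC c h
  have hcov' : C ⊆ ⋃ c ∈ (t' : Set (EuclideanSpace ℝ (Fin n))), ball c (r/4) := by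
    refine hcovt.trans (Set.iUnion₂_subset fun c hc => ?_)
    exact Set.subset_iUnion₂ (s := fun c _ => ball c (r/4)) c (Finset.mem_insert_of_mem hc)
  -- chains
  have hch := chain_exists' C hC_conn.isPreconnected t' ht'C hcov' xs hxst' (by positivity)
  have hch' : ∀ c : EuclideanSpace ℝ (Fin n), ∃ (L : ℕ) (g : ℕ → EuclideanSpace ℝ (Fin n)),
      c ∈ t' → (g 0 = c ∧ g L = xs ∧ (∀ i ≤ L, g i ∈ t') ∧
        ∀ i < L, dist (g i) (g (i+1)) < 2*(r/4)) := by
    intro c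
    by_cases hc : c ∈ t'
    · obtain ⟨L, g, h1, h2, h3, h4⟩ := hch c hc
      exact ⟨L, g, fun _ => ⟨h1, h2, h3, h4⟩⟩
    · exact ⟨0, fun _ => xs, fun h => absurd h hc⟩
  choose L g hLg using hch'
  set M : ℕ := t'.sup L + 1 with hMdef
  have hLM : ∀ c ∈ t', L c + 1 ≤ M := fun c hc => by
    have := Finset.le_sup (f := L) hc; omega
  -- q
  have ht'ne : t'.Nonempty := ⟨xs, hxst'⟩
  set q : ℝ := min (t'.inf' ht'ne fun c => β * (volume (C ∩ ball c (r/4))).toReal)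
      (min (β * (volume T).toReal) 1) with hqdef
  have hvol_pos : ∀ c ∈ t', 0 < (volume (C ∩ ball c (r/4))).toReal := by
    intro c hc
    refine ENNReal.toReal_pos (ne_of_gt (hC_pos c (ht'C hc) _ (by positivity))) ?_
    exact ne_of_lt (lt_of_le_of_lt (measure_mono Set.inter_subset_right) measure_ball_lt_top)
  have hq_pos : 0 < q := by
    refine lt_min ((Finset.lt_inf'_iff ht'ne).2 fun c hc => ?_) (lt_min ?_ one_pos)
    · have := hvol_pos c hc; positivity
    · have : 0 < (volume T).toReal := ENNReal.toReal_pos (ne_of_gt hT_pos) (ne_of_lt hT_fin)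
      positivity
  have hq1 : q ≤ 1 := le_trans (min_le_right _ _) (min_le_right _ _)
  have hqT : q ≤ β * (volume T).toReal := le_trans (min_le_right _ _) (min_le_left _ _)
  have hqc : ∀ c ∈ t', q ≤ β * (volume (C ∩ ball c (r/4))).toReal := fun c hc =>
    le_trans (min_le_left _ _) (Finset.inf'_le _ hc)
  have step := step_lemma C μ ℱ x hadp β r htrans
  -- chain probability lemma
  have chain_prob : ∀ (k : ℕ) (c : EuclideanSpace ℝ (Fin n)), c ∈ t' → ∀ F : Set Ω,
      MeasurableSet[ℱ k] F → (∀ᵐ ω ∂μ, ω ∈ F → x k ω ∈ ball c (r/4)) →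
      q ^ (L c + 1) * (μ F).toReal ≤ (μ (F ∩ x (k + (L c + 1)) ⁻¹' T)).toReal := by
    intro k c hct F hFmeas hFball
    obtain ⟨hg0, hgL, hgt, hgd⟩ := hLg c hct
    have ind : ∀ j, j ≤ L c → ∃ Fj : Set Ω, Fj ⊆ F ∧ MeasurableSet[ℱ (k+j)] Fj ∧
        (∀ᵐ ω ∂μ, ω ∈ Fj → x (k+j) ω ∈ ball (g c j) (r/4)) ∧
        q ^ j * (μ F).toReal ≤ (μ Fj).toReal := by
      intro j
      induction j with
      | zero =>
        intro _
        exact ⟨F, subset_rfl, hFmeas, by rw [hg0]; simpa using hFball, by simp⟩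
      | succ j ih =>
        intro hj
        obtain ⟨Fj, hsub, hmeas, hball, hμj⟩ := ih (by omega)
        set G : Set (EuclideanSpace ℝ (Fin n)) := C ∩ ball (g c (j+1)) (r/4) with hGdef
        have hGmeas : MeasurableSet G :=
          (hC_cpt.isClosed.measurableSet).inter measurableSet_ball
        have hGb : ∀ᵐ ω ∂μ, ω ∈ Fj → G ⊆ ball (x (k+j) ω) r := by
          filter_upwards [hball] with ω hb hω y hy
          have h1 : dist y (g c (j+1)) < r/4 := hy.2
          have h2 : dist (g c j) (g c (j+1)) < 2*(r/4) := hgd j (by omega)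
          have h3 : dist (x (k+j) ω) (g c j) < r/4 := hb hω
          have := dist_triangle4 y (g c (j+1)) (g c j) (x (k+j) ω)
          rw [mem_ball, dist_comm (g c (j+1)) (g c j)] at *
          rw [dist_comm] at h3
          linarith
        have hstep := step (k+j) Fj hmeas G hGmeas Set.inter_subset_left hGb
        refine ⟨Fj ∩ x (k+j+1) ⁻¹' G, Set.inter_subset_left.trans hsub,
          ((ℱ.mono (Nat.le_succ _) _ hmeas).inter
            (hadp (k+j+1) hGmeas)), ?_, ?_⟩
        · refine Filter.Eventually.of_forall fun ω hω => ?_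
          exact (hω.2 : x (k+j+1) ω ∈ G).2
        · have hq' : q * (μ Fj).toReal ≤ β * (volume G).toReal * (μ Fj).toReal :=
            mul_le_mul_of_nonneg_right (hqc _ (hgt (j+1) (by omega))) ENNReal.toReal_nonneg
          calc q ^ (j+1) * (μ F).toReal = q * (q ^ j * (μ F).toReal) := by ring
            _ ≤ q * (μ Fj).toReal := mul_le_mul_of_nonneg_left hμj hq_pos.le
            _ ≤ β * (volume G).toReal * (μ Fj).toReal := hq'
            _ ≤ (μ (Fj ∩ x (k+j+1) ⁻¹' G)).toReal := hstep
    obtain ⟨FL, hsub, hmeas, hball, hμL⟩ := ind (L c) le_rfl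
    have hTb : ∀ᵐ ω ∂μ, ω ∈ FL → T ⊆ ball (x (k + L c) ω) r := by
      filter_upwards [hball] with ω hb hω y hy
      have h1 : dist y xs < δ := hy.2
      have h3 : dist (x (k + L c) ω) (g c (L c)) < r/4 := hb hω
      rw [hgL] at h3
      rw [mem_ball]
      have := dist_triangle y xs (x (k + L c) ω)
      rw [dist_comm xs] at this
      linarith
    have hstep := step (k + L c) FL hmeas T hT_meas hTC hTb
    have hfin : ∀ s : Set Ω, μ s ≠ ⊤ := fun s => measure_ne_top μ s
    calc q ^ (L c + 1) * (μ F).toReal = q * (q ^ (L c) * (μ F).toReal) := by ring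
      _ ≤ q * (μ FL).toReal := mul_le_mul_of_nonneg_left hμL hq_pos.le
      _ ≤ β * (volume T).toReal * (μ FL).toReal :=
          mul_le_mul_of_nonneg_right hqT ENNReal.toReal_nonneg
      _ ≤ (μ (FL ∩ x (k + L c + 1) ⁻¹' T)).toReal := hstep
      _ ≤ (μ (F ∩ x (k + (L c + 1)) ⁻¹' T)).toReal := by
          apply ENNReal.toReal_mono (hfin _)
          apply measure_mono
          exact Set.inter_subset_inter_left _ hsub
  -- the hitting event within a block of M steps
  set Hit : ℕ → Set Ω := fun k => ⋃ i ∈ Finset.Icc 1 M, x (k+i) ⁻¹' T with hHitdef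
  have hHit_meas : ∀ k, MeasurableSet (Hit k) := fun k =>
    MeasurableSet.biUnion (Finset.Icc 1 M).countable_toSet
      (fun i _ => ℱ.le (k+i) _ (hadp (k+i) hT_meas))
  have hfin : ∀ s : Set Ω, μ s ≠ ⊤ := fun s => measure_ne_top μ s
  -- block lemma
  have block : ∀ (s : Finset (EuclideanSpace ℝ (Fin n))), s ⊆ t' →
      ∀ (k : ℕ) (F : Set Ω), MeasurableSet[ℱ k] F →
      (∀ᵐ ω ∂μ, ω ∈ F → x k ω ∈ ⋃ c ∈ (s : Set (EuclideanSpace ℝ (Fin n))), ball c (r/4)) →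
      q ^ M * (μ F).toReal ≤ (μ (F ∩ Hit k)).toReal := by
    intro s
    induction s using Finset.induction_on with
    | empty =>
      intro _ k F hFmeas hcov
      have hF0 : μ F = 0 := measure_eq_zero_iff_ae_notMem.2 (by
        filter_upwards [hcov] with ω h hmem
        simpa using h hmem)
      simp [hF0, ENNReal.toReal_nonneg]
    | @insert a s ha ih =>
      intro hsub k F hFmeas hcov
      have hat' : a ∈ t' := hsub (Finset.mem_insert_self a s)
      have hBmeas : MeasurableSet[ℱ k] (x k ⁻¹' ball a (r/4)) :=
        hadp k measurableSet_ball
      set F1 := F ∩ x k ⁻¹' ball a (r/4) with hF1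
      set F2 := F \ x k ⁻¹' ball a (r/4) with hF2
      have hF1meas : MeasurableSet[ℱ k] F1 := hFmeas.inter hBmeas
      have hF2meas : MeasurableSet[ℱ k] F2 := hFmeas.diff hBmeas
      have h1 := chain_prob k a hat' F1 hF1meas
        (Filter.Eventually.of_forall fun ω hω => hω.2)
      have hsubHit : F1 ∩ x (k + (L a + 1)) ⁻¹' T ⊆ F1 ∩ Hit k := by
        refine Set.inter_subset_inter_right _ fun ω hω => ?_
        exact Set.mem_iUnion₂.2 ⟨L a + 1, Finset.mem_Icc.2 ⟨by omega, hLM a hat'⟩, hω⟩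
      have h1' : q ^ M * (μ F1).toReal ≤ (μ (F1 ∩ Hit k)).toReal := by
        calc q ^ M * (μ F1).toReal ≤ q ^ (L a + 1) * (μ F1).toReal :=
            mul_le_mul_of_nonneg_right
              (pow_le_pow_of_le_one hq_pos.le hq1 (hLM a hat')) ENNReal.toReal_nonneg
          _ ≤ (μ (F1 ∩ x (k + (L a + 1)) ⁻¹' T)).toReal := h1
          _ ≤ _ := ENNReal.toReal_mono (hfin _) (measure_mono hsubHit)
      have h2 : q ^ M * (μ F2).toReal ≤ (μ (F2 ∩ Hit k)).toReal := by
        refine ih (fun c hc => hsub (Finset.mem_insert_of_mem hc)) k F2 hF2meas ?_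
        filter_upwards [hcov] with ω h hω
        obtain ⟨c, hc, hxc⟩ := Set.mem_iUnion₂.1 (h hω.1)
        rcases Finset.mem_insert.1 (Finset.mem_coe.1 hc) with rfl | hcs
        · exact absurd hxc hω.2
        · exact Set.mem_iUnion₂.2 ⟨c, Finset.mem_coe.2 hcs, hxc⟩
      have hdisj : Disjoint F1 F2 :=
        Set.disjoint_sdiff_right.mono_left Set.inter_subset_right
      have hunion : F = F1 ∪ F2 := (Set.inter_union_diff F _).symm
      have hadd : (μ F).toReal = (μ F1).toReal + (μ F2).toReal := by
        rw [hunion, measure_union hdisj (ℱ.le k _ hF2meas),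
          ENNReal.toReal_add (hfin _) (hfin _)]
      have haddHit : (μ (F1 ∩ Hit k)).toReal + (μ (F2 ∩ Hit k)).toReal
          ≤ (μ (F ∩ Hit k)).toReal := by
        rw [← ENNReal.toReal_add (hfin _) (hfin _),
          ← measure_union (hdisj.mono Set.inter_subset_left Set.inter_subset_left)
            ((ℱ.le k _ hF2meas).inter (hHit_meas k))]
        refine ENNReal.toReal_mono (hfin _) (measure_mono ?_)
        exact Set.union_subset
          (Set.inter_subset_inter_left _ Set.inter_subset_left)
          (Set.inter_subset_inter_left _ Set.diff_subset)
      calc q ^ M * (μ F).toReal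
          = q ^ M * (μ F1).toReal + q ^ M * (μ F2).toReal := by rw [hadd]; ring
        _ ≤ (μ (F1 ∩ Hit k)).toReal + (μ (F2 ∩ Hit k)).toReal := add_le_add h1' h2
        _ ≤ (μ (F ∩ Hit k)).toReal := haddHit
  -- no-hit events
  set N : ℕ → Set Ω := fun k => ⋂ j ∈ Finset.range (k+1), x j ⁻¹' Tᶜ with hNdef
  have hN_meas : ∀ k, MeasurableSet[ℱ k] (N k) := fun k =>
    MeasurableSet.biInter (Finset.range (k+1)).countable_toSet (fun j hj =>
      ℱ.mono (Nat.lt_succ_iff.1 (Finset.mem_range.1 hj)) _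
        (hadp j hT_meas.compl))
  have h1mq : 0 ≤ 1 - q ^ M := by
    have : q ^ M ≤ 1 := pow_le_one₀ hq_pos.le hq1
    linarith
  have hrec : ∀ k, (μ (N (k + M))).toReal ≤ (1 - q ^ M) * (μ (N k)).toReal := by
    intro k
    have hsubN : N (k + M) ⊆ N k \ Hit k := by
      intro ω hω
      simp only [hNdef, Set.mem_iInter, Finset.mem_range, Set.mem_preimage,
        Set.mem_compl_iff] at hω
      constructor
      · simp only [hNdef, Set.mem_iInter, Finset.mem_range, Set.mem_preimage,
          Set.mem_compl_iff]
        exact fun j hj => hω j (by omega)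
      · intro hHit
        obtain ⟨i, hi, hx⟩ := Set.mem_iUnion₂.1 hHit
        have hi' := Finset.mem_Icc.1 hi
        exact hω (k+i) (by omega) hx
    have hblk := block t' subset_rfl k (N k) (hN_meas k) (by
      filter_upwards [hxC k] with ω hωC _
      exact hcov' hωC)
    have hθ : (μ (N k ∩ Hit k)).toReal + (μ (N k \ Hit k)).toReal = (μ (N k)).toReal := by
      rw [← ENNReal.toReal_add (hfin _) (hfin _), measure_inter_add_diff _ (hHit_meas k)]
    have h1 : (μ (N (k+M))).toReal ≤ (μ (N k \ Hit k)).toReal :=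
      ENNReal.toReal_mono (hfin _) (measure_mono hsubN)
    nlinarith [hblk, ENNReal.toReal_nonneg (a := μ (N k))]
  have hiter : ∀ t : ℕ, (μ (N (t * M))).toReal ≤ (1 - q ^ M) ^ t := by
    intro t
    induction t with
    | zero =>
      have h := ENNReal.toReal_mono (by simp) (prob_le_one (μ := μ) (s := N 0))
      simpa using h
    | succ t iht =>
      calc (μ (N ((t+1) * M))).toReal = (μ (N (t*M + M))).toReal := by rw [Nat.succ_mul]
        _ ≤ (1 - q^M) * (μ (N (t*M))).toReal := hrec _
        _ ≤ (1 - q^M) * (1-q^M)^t := mul_le_mul_of_nonneg_left iht h1mq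
        _ = (1-q^M)^(t+1) := by ring
  have hlim : Tendsto (fun t : ℕ => (1 - q^M)^t) atTop (nhds 0) := by
    apply tendsto_pow_atTop_nhds_zero_of_lt_one h1mq
    have : 0 < q^M := pow_pos hq_pos M
    linarith
  have hInt : μ (⋂ k, N k) = 0 := by
    have hle : ∀ t : ℕ, (μ (⋂ k, N k)).toReal ≤ (1 - q^M)^t := fun t =>
      le_trans (ENNReal.toReal_mono (hfin _) (measure_mono (Set.iInter_subset N (t*M))))
        (hiter t)
    have h0 : (μ (⋂ k, N k)).toReal ≤ 0 :=
      ge_of_tendsto hlim (Filter.Eventually.of_forall hle)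
    have h0' : (μ (⋂ k, N k)).toReal = 0 := le_antisymm h0 ENNReal.toReal_nonneg
    rcases (ENNReal.toReal_eq_zero_iff _).1 h0' with h | h
    · exact h
    · exact absurd h (hfin _)
  filter_upwards [measure_eq_zero_iff_ae_notMem.1 hInt] with ω hω
  simp only [hNdef, Set.mem_iInter, not_forall, Set.mem_preimage, Set.mem_compl_iff,
    not_not] at hω
  obtain ⟨k, j, hj, hxj⟩ := hω
  rw [hm_eq]
  exact ⟨j, hδf _ (mem_ball.1 hxj.2)⟩

/-- Theorem 2 (Global Optimisation): for an adapted sequence of random points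
of a nonempty compact connected set `C ⊆ ℝⁿ` (every ball about a point of `C`
meeting `C` in positive Lebesgue measure), whose one-step transition
probabilities conditioned on the past are bounded below by `β` times the
Lebesgue volume on an `r`-neighbourhood of the current point intersected with
`C`, the running minimum of a continuous `f` along the sequence converges
almost surely to the global minimum of `f` over `C`. -/
theorem stmt_3 (n : ℕ) (hn : 0 < n)
    (C : Set (EuclideanSpace ℝ (Fin n)))
    (hC_ne : C.Nonempty) (hC_cpt : IsCompact C) (hC_conn : IsConnected C)
    (hC_pos : ∀ x ∈ C, ∀ δ : ℝ, 0 < δ →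
      0 < MeasureTheory.volume (C ∩ Metric.ball x δ))
    (f : EuclideanSpace ℝ (Fin n) → ℝ) (hf : Continuous f)
    {Ω : Type*} {m0 : MeasurableSpace Ω} (μ : Measure Ω)
    [IsProbabilityMeasure μ] (ℱ : Filtration ℕ m0)
    (x : ℕ → Ω → EuclideanSpace ℝ (Fin n))
    (hadp : Adapted ℱ x)
    (hxC : ∀ k, ∀ᵐ ω ∂μ, x k ω ∈ C)
    (β r : ℝ) (hβ : 0 < β) (hr : 0 < r)
    (htrans : ∀ k, ∀ S : Set (EuclideanSpace ℝ (Fin n)), MeasurableSet S →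
      ∀ᵐ ω ∂μ,
        β * (MeasureTheory.volume (S ∩ C ∩ Metric.ball (x k ω) r)).toReal ≤
          (μ[Set.indicator ((x (k + 1)) ⁻¹' S) (fun _ => (1 : ℝ)) | ℱ k]) ω) :
    ∀ᵐ ω ∂μ,
      Tendsto
        (fun k : ℕ =>
          (Finset.range (k + 1)).inf' Finset.nonempty_range_add_one
            (fun j => f (x j ω)))
        atTop (nhds (sInf (f '' C))) := by
  set m := sInf (f '' C) with hm
  have hbdd : BddBelow (f '' C) := (hC_cpt.image hf).bddBelow
  have hmle : ∀ y ∈ C, m ≤ f y := fun y hy => csInf_le hbdd ⟨y, hy, rfl⟩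
  have hkey : ∀ p : ℕ, ∀ᵐ ω ∂μ, ∃ j, f (x j ω) < m + 1/(p+1) :=
    fun p => hit_lemma n C hC_ne hC_cpt hC_conn hC_pos f hf μ ℱ x hadp hxC β r hβ hr htrans
      (1/(p+1)) (by positivity)
  filter_upwards [ae_all_iff.2 hkey, ae_all_iff.2 hxC] with ω hω hωC
  rw [Metric.tendsto_atTop]
  intro ε hε
  obtain ⟨p, hp⟩ := exists_nat_one_div_lt hε
  obtain ⟨j0, hj0⟩ := hω p
  refine ⟨j0, fun k hk => ?_⟩
  set y := (Finset.range (k + 1)).inf' Finset.nonempty_range_add_one (fun j => f (x j ω)) with hy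
  have hyle : y ≤ f (x j0 ω) :=
    Finset.inf'_le _ (Finset.mem_range.2 (by omega))
  have hmy : m ≤ y :=
    Finset.le_inf' _ _ fun j _ => hmle _ (hωC j)
  rw [Real.dist_eq, abs_of_nonneg (by linarith)]
  have : (1:ℝ)/(p+1) < ε := by exact_mod_cast hp
  linarith
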